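/- Let p : ℝ → ℝ² be differentiable at 0 with ‖p(t)‖ > 1 for all t. Define s(t) = √(‖p(t)‖² − 1) and q(t) = ‖p(t)‖⁻² · (p(t) − s(t)·J(p(t))), which is the point where the tangent line from p(t) touches the unit circle centred at the origin (chosen so that a counterclockwise circular arc followed by the straight segment from q(t) to p(t) is a C¹ path). Let θ : ℝ → ℝ be differentiable at 0 and satisfy (cos θ(t), sin θ(t)) = q(t) for all t. Then the derivative at 0 of the function t ↦ θ(t) + s(t) equals ⟨v, x̂⟩, the inner product of the velocity v = p'(0) with the unit vector x̂ = (p(0) − q(0))/‖p(0) − q(0)‖ from the tangency point to the moving point. -/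

import Mathlib

open scoped RealInnerProductSpace

noncomputable section

/-- Rotation by π/2 in the plane: `J (x, y) = (-y, x)`. -/
def J (v : EuclideanSpace ℝ (Fin 2)) : EuclideanSpace ℝ (Fin 2) := !₂[-(v 1), v 0]

set_option maxHeartbeats 1000000 in
/-- **Proposition 4.1: first variation of an arc–segment path.**  Let `p t` be a moving
point outside the closed unit disk, `s t = √(‖p t‖² − 1)` the tangent length, and
`q t = ‖p t‖⁻² • (p t − s t • J (p t))` the tangency point on the unit circle, with a
differentiable angle coordinate `θ t` of `q t`.  Then the derivative at `0` of the
length `θ t + s t` of the concatenated arc–segment path is `⟪v, x̂⟫`, where `v = p' 0`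
and `x̂` is the unit vector from `q 0` to `p 0`. -/
theorem first_variation_arc_segment
    (p : ℝ → EuclideanSpace ℝ (Fin 2))
    (hp : DifferentiableAt ℝ p 0) (hout : ∀ t, 1 < ‖p t‖)
    (q : ℝ → EuclideanSpace ℝ (Fin 2))
    (hq : ∀ t, q t = (‖p t‖ ^ 2)⁻¹ • (p t - Real.sqrt (‖p t‖ ^ 2 - 1) • J (p t)))
    (θ : ℝ → ℝ) (hθ : DifferentiableAt ℝ θ 0)
    (hangle : ∀ t, (!₂[Real.cos (θ t), Real.sin (θ t)] : EuclideanSpace ℝ (Fin 2)) = q t) :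
    deriv (fun t => θ t + Real.sqrt (‖p t‖ ^ 2 - 1)) 0
      = ⟪deriv p 0, ‖p 0 - q 0‖⁻¹ • (p 0 - q 0)⟫ := by
  set a : ℝ → ℝ := fun t => p t 0 with ha_def
  set b : ℝ → ℝ := fun t => p t 1 with hb_def
  set A : ℝ := deriv p 0 0 with hA
  set B : ℝ := deriv p 0 1 with hB
  have hpn : ∀ t, ‖p t‖ ^ 2 = a t ^ 2 + b t ^ 2 := by
    intro t
    rw [EuclideanSpace.norm_eq, Real.sq_sqrt (by positivity)]
    simp [Fin.sum_univ_two, sq_abs, ha_def, hb_def]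
  set n : ℝ → ℝ := fun t => a t ^ 2 + b t ^ 2 with hn_def
  have hn1 : ∀ t, 1 < n t := by
    intro t
    have h1 := hout t
    have h2 : (1:ℝ) < ‖p t‖ ^ 2 := by nlinarith
    rw [hpn t] at h2
    exact h2
  have hn0 : (0:ℝ) < n 0 := lt_trans one_pos (hn1 0)
  have hn0ne : n 0 ≠ 0 := ne_of_gt hn0
  set s : ℝ → ℝ := fun t => Real.sqrt (n t - 1) with hs_def
  have hspos : ∀ t, 0 < s t := fun t => Real.sqrt_pos.2 (by linarith [hn1 t])
  have hs0ne : s 0 ≠ 0 := ne_of_gt (hspos 0)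
  have hssq : ∀ t, s t ^ 2 = n t - 1 := fun t => Real.sq_sqrt (by linarith [hn1 t])
  have ha : HasDerivAt a A 0 := by
    have := (EuclideanSpace.proj (0 : Fin 2) (𝕜 := ℝ)).hasFDerivAt.comp_hasDerivAt 0 hp.hasDerivAt
    exact this
  have hb : HasDerivAt b B 0 := by
    have := (EuclideanSpace.proj (1 : Fin 2) (𝕜 := ℝ)).hasFDerivAt.comp_hasDerivAt 0 hp.hasDerivAt
    exact this
  have hn : HasDerivAt n (2 * a 0 * A + 2 * b 0 * B) 0 := by
    have := (ha.pow 2).add (hb.pow 2)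
    convert this using 1
    · rfl
    · rfl
    · rfl
    push_cast
    ring
  set N' : ℝ := 2 * a 0 * A + 2 * b 0 * B with hN'
  set S' : ℝ := N' / (2 * s 0) with hS'
  have hs : HasDerivAt s S' 0 := by
    have := (hn.sub_const 1).sqrt (by linarith [hn1 0])
    simpa [hs_def, hS'] using this
  have hq0 : ∀ t, q t 0 = (a t + s t * b t) / n t := by
    intro t
    rw [hq t]
    have : Real.sqrt (‖p t‖ ^ 2 - 1) = s t := by rw [hpn t]
    simp [this, hpn t, J, ha_def, hb_def, hn_def, div_eq_inv_mul]
    exact Or.inl (Or.inl rfl)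
  have hq1 : ∀ t, q t 1 = (b t - s t * a t) / n t := by
    intro t
    rw [hq t]
    have : Real.sqrt (‖p t‖ ^ 2 - 1) = s t := by rw [hpn t]
    simp [this, hpn t, J, ha_def, hb_def, hn_def, div_eq_inv_mul]
    exact Or.inl (Or.inl rfl)
  have hcos : ∀ t, Real.cos (θ t) = (a t + s t * b t) / n t := by
    intro t
    have := congrArg (fun v : EuclideanSpace ℝ (Fin 2) => v 0) (hangle t)
    simpa [hq0 t] using this
  have hsin : ∀ t, Real.sin (θ t) = (b t - s t * a t) / n t := by
    intro t
    have := congrArg (fun v : EuclideanSpace ℝ (Fin 2) => v 1) (hangle t)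
    simpa [hq1 t] using this
  set θ' : ℝ := deriv θ 0 with hθ'def
  have hθd : HasDerivAt θ θ' 0 := hθ.hasDerivAt
  have hQ1 : HasDerivAt (fun t => (a t + s t * b t) / n t)
      (((A + (S' * b 0 + s 0 * B)) * n 0 - (a 0 + s 0 * b 0) * N') / n 0 ^ 2) 0 :=
    (ha.add (hs.mul hb)).div hn hn0ne
  have hQ2 : HasDerivAt (fun t => (b t - s t * a t) / n t)
      (((B - (S' * a 0 + s 0 * A)) * n 0 - (b 0 - s 0 * a 0) * N') / n 0 ^ 2) 0 :=
    (hb.sub (hs.mul ha)).div hn hn0ne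
  have hC : HasDerivAt (fun t => (a t + s t * b t) / n t) (-Real.sin (θ 0) * θ') 0 := by
    have h := hθd.cos
    have he : (fun t => Real.cos (θ t)) = fun t => (a t + s t * b t) / n t := funext hcos
    rwa [he] at h
  have hS : HasDerivAt (fun t => (b t - s t * a t) / n t) (Real.cos (θ 0) * θ') 0 := by
    have h := hθd.sin
    have he : (fun t => Real.sin (θ t)) = fun t => (b t - s t * a t) / n t := funext hsin
    rwa [he] at h
  have eq1 : -Real.sin (θ 0) * θ' =
      ((A + (S' * b 0 + s 0 * B)) * n 0 - (a 0 + s 0 * b 0) * N') / n 0 ^ 2 :=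
    hC.unique hQ1
  have eq2 : Real.cos (θ 0) * θ' =
      ((B - (S' * a 0 + s 0 * A)) * n 0 - (b 0 - s 0 * a 0) * N') / n 0 ^ 2 :=
    hS.unique hQ2
  have hθval : θ' = Real.cos (θ 0) * (((B - (S' * a 0 + s 0 * A)) * n 0 - (b 0 - s 0 * a 0) * N') / n 0 ^ 2)
      - Real.sin (θ 0) * (((A + (S' * b 0 + s 0 * B)) * n 0 - (a 0 + s 0 * b 0) * N') / n 0 ^ 2) := by
    linear_combination Real.cos (θ 0) * eq2 - Real.sin (θ 0) * eq1
      - θ' * Real.sin_sq_add_cos_sq (θ 0)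
  have hLHS : deriv (fun t => θ t + Real.sqrt (‖p t‖ ^ 2 - 1)) 0 = θ' + S' := by
    have he : (fun t => θ t + Real.sqrt (‖p t‖ ^ 2 - 1)) = fun t => θ t + s t := by
      funext t; rw [hpn t]
    rw [he]
    exact (hθd.add hs).deriv
  have hpa : p 0 0 = a 0 := rfl
  have hpb : p 0 1 = b 0 := rfl
  have hsq0 := hssq 0
  have hpq0 : (p 0 - q 0) 0 = s 0 * (s 0 * a 0 - b 0) / n 0 := by
    simp only [PiLp.sub_apply, hq0 0, hpa]
    field_simp
    linear_combination (-(a 0)) * hsq0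
  have hpq1 : (p 0 - q 0) 1 = s 0 * (s 0 * b 0 + a 0) / n 0 := by
    simp only [PiLp.sub_apply, hq1 0, hpb]
    field_simp
    linear_combination (-(b 0)) * hsq0
  have hnorm : ‖p 0 - q 0‖ = s 0 := by
    rw [EuclideanSpace.norm_eq]
    have hX : (s 0 * (s 0 * a 0 - b 0) / n 0) ^ 2 + (s 0 * (s 0 * b 0 + a 0) / n 0) ^ 2
        = s 0 ^ 2 := by
      field_simp
      linear_combination (a 0 ^ 2 + b 0 ^ 2) * hsq0
    have hsum : ∑ i : Fin 2, ‖(p 0 - q 0) i‖ ^ 2 = s 0 ^ 2 := by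
      simp only [Fin.sum_univ_two, Real.norm_eq_abs, sq_abs]
      rw [hpq0, hpq1, hX]
    rw [hsum, Real.sqrt_sq (le_of_lt (hspos 0))]
  have hRHS : ⟪deriv p 0, ‖p 0 - q 0‖⁻¹ • (p 0 - q 0)⟫
      = A * ((s 0)⁻¹ * (s 0 * (s 0 * a 0 - b 0) / n 0))
        + B * ((s 0)⁻¹ * (s 0 * (s 0 * b 0 + a 0) / n 0)) := by
    rw [hnorm]
    have he : ⟪deriv p 0, (s 0)⁻¹ • (p 0 - q 0)⟫
        = A * ((s 0)⁻¹ * (p 0 - q 0) 0) + B * ((s 0)⁻¹ * (p 0 - q 0) 1) := by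
      simp only [PiLp.inner_apply, RCLike.inner_apply, starRingEnd_apply, star_trivial,
        Fin.sum_univ_two, PiLp.smul_apply, smul_eq_mul, hA, hB]
      ring
    rw [he, hpq0, hpq1]
  rw [hLHS, hRHS, hθval, hcos 0, hsin 0, hS', hN']
  have hsq0' : s 0 ^ 2 = a 0 ^ 2 + b 0 ^ 2 - 1 := hsq0
  have hnabpos : (0:ℝ) < a 0 ^ 2 + b 0 ^ 2 := by
    have h := hn0; rw [hn_def] at h; simpa using h
  have hnabne : (a 0 ^ 2 + b 0 ^ 2 : ℝ) ≠ 0 := ne_of_gt hnabpos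
  clear_value n s
  clear hQ1 hQ2 hC hS eq1 eq2 hθval hLHS hRHS hpq0 hpq1 hnorm hq0 hq1 hcos hsin hangle hq hθd hθ hp hout ha hb hn hs hpn hn1 hsq0 hssq hspos hs_def hS' hN'
  simp only [hn_def]
  field_simp
  linear_combination ((-1) * b 0 ^ 3*s 0 ^ 1*A ^ 1 + (-1) * b 0 ^ 5*B ^ 1 + (1) * a 0 ^ 1*b 0 ^ 2*s 0 ^ 1*B ^ 1 + (-1) * a 0 ^ 1*b 0 ^ 4*A ^ 1 + (-1) * a 0 ^ 2*b 0 ^ 1*s 0 ^ 1*A ^ 1 + (-2) * a 0 ^ 2*b 0 ^ 3*B ^ 1 + (1) * a 0 ^ 3*s 0 ^ 1*B ^ 1 + (-2) * a 0 ^ 3*b 0 ^ 2*A ^ 1 + (-1) * a 0 ^ 4*b 0 ^ 1*B ^ 1 + (-1) * a 0 ^ 5*A ^ 1) * hsq0'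

end
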